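/- Let Δ' and Δ'' be distributions of Σ such that Δ' is substitutable into the i-th component of Δ'' (i.e., A(Δ') ⊆ Σ''_i). For any language L ⊆ Σ*, if L is decomposable with respect to Δ' and L is decomposable with respect to Δ'', then L is decomposable with respect to the distribution (Δ' ⊢_i Δ''). -/

import Mathlib

/-- A *distribution* of the (finite) alphabet `α`: a family of non-empty,
pairwise incomparable (under set inclusion) sub-alphabets whose union is `α`.
Its size is `comps.ncard`. -/
structure Distr (α : Type) [Fintype α] where
  comps : Set (Set α)
  comps_nonempty : ∀ S ∈ comps, S.Nonempty
  comps_cover : ∀ a : α, ∃ S ∈ comps, a ∈ S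
  comps_incomp : ∀ S ∈ comps, ∀ T ∈ comps, S ≠ T → ¬ S ⊆ T

section Defs

variable {α : Type} [Fintype α]

/-- Natural projection `P_{Σ'}`: erase from a string all symbols not in `S`. -/
noncomputable def projA (S : Set α) (s : List α) : List α :=
  s.filter fun a => @decide (a ∈ S) (Classical.propDecidable _)

/-- `L` is decomposable with respect to `Δ`:
`L = ∥_i P_{Σ_i}(L) = ⋂_i P_{Σ_i}⁻¹(P_{Σ_i}(L))`. -/
def Decomposable (L : Set (List α)) (Δ : Distr α) : Prop :=
  L = ⋂ S ∈ Δ.comps, projA S ⁻¹' (projA S '' L)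

/-- The partial order `≤_Σ` on distributions: every component of `Δ` is
contained in some component of `Δ'`. -/
def DistLE (Δ Δ' : Distr α) : Prop :=
  ∀ S ∈ Δ.comps, ∃ T ∈ Δ'.comps, S ⊆ T

/-- `P` is a *reduction* of `Δ`. -/
def IsReduction (P : Set (Distr α)) (Δ : Distr α) : Prop :=
  2 ≤ P.ncard ∧
  (∀ Δ' ∈ P, Δ'.comps.ncard < Δ.comps.ncard) ∧
  (∀ L : Set (List α), Decomposable L Δ ↔ ∀ Δ' ∈ P, Decomposable L Δ')

/-- The maximal members (under set inclusion) of a family of sets. -/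
def MaximalMem {β : Type} (F : Set (Set β)) : Set (Set β) :=
  {S | S ∈ F ∧ ∀ T ∈ F, S ⊆ T → S = T}

/-- The dependence relation `D_Δ`. -/
def DepRel (Δ : Distr α) : Set (α × α) :=
  {p | ∃ S ∈ Δ.comps, p.1 ∈ S ∧ p.2 ∈ S}

/-- The independence relation `I_Δ = Σ × Σ − D_Δ`. -/
def IndepRel (Δ : Distr α) : Set (α × α) :=
  {p | ¬ ∃ S ∈ Δ.comps, p.1 ∈ S ∧ p.2 ∈ S}

/-- `Σ' ⊑ Δ`: `Σ'` is contained in some component of `Δ`. -/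
def SqSub (S : Set α) (Δ : Distr α) : Prop :=
  ∃ T ∈ Δ.comps, S ⊆ T

/-- `Δ` is the greatest lower bound of the family `D` with respect to `≤_Σ`. -/
def IsGLBFam {l : ℕ} (D : Fin l → Distr α) (Δ : Distr α) : Prop :=
  (∀ i, DistLE Δ (D i)) ∧
  ∀ Δ''' : Distr α, (∀ i, DistLE Δ''' (D i)) → DistLE Δ''' Δ

/-- `Δ'` is *merged* from `Δ`: `Δ' ≠ (Σ)` and `Δ'` is obtained from a
partition of the components of `Δ` having at least one block of size ≥ 2 by
taking the unions over the blocks and keeping only the maximal resulting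
sub-alphabets. -/
def MergedFrom (Δ' Δ : Distr α) : Prop :=
  Δ'.comps ≠ {Set.univ} ∧
  ∃ part : Set (Set (Set α)),
    (∀ B ∈ part, B.Nonempty) ∧
    (∀ B ∈ part, B ⊆ Δ.comps) ∧
    (∀ B ∈ part, ∀ C ∈ part, B ≠ C → Disjoint B C) ∧
    (∀ S ∈ Δ.comps, ∃ B ∈ part, S ∈ B) ∧
    (∃ B ∈ part, ∃ S ∈ B, ∃ T ∈ B, S ≠ T) ∧
    Δ'.comps = MaximalMem {U : Set α | ∃ B ∈ part, U = ⋃₀ B}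

/-- Membership in the search space `S_Δ`: a set of distributions merged from
`Δ` that are pairwise `≤_Σ`-incomparable. -/
def MemS (Δ : Distr α) (P : Set (Distr α)) : Prop :=
  (∀ Δ' ∈ P, MergedFrom Δ' Δ) ∧
  ∀ Δ₁ ∈ P, ∀ Δ₂ ∈ P, Δ₁ ≠ Δ₂ → ¬ DistLE Δ₁ Δ₂

/-- The ordering `≤_Δ` on sets of distributions: every member of `Q` has a
member of `P` below it with respect to `≤_Σ`. -/
def SetLE (P Q : Set (Distr α)) : Prop :=
  ∀ Δ' ∈ Q, ∃ Δ'' ∈ P, DistLE Δ'' Δ'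

/-- `[F]`: the `≤_Σ`-minimal members of a set of distributions. -/
def MinimalD (F : Set (Distr α)) : Set (Distr α) :=
  {Δ' | Δ' ∈ F ∧ ∀ Δ'' ∈ F, DistLE Δ'' Δ' → DistLE Δ' Δ''}

/-- `Δ'` is obtained from `Δ` by merging exactly two components `S ≠ T`
(and keeping only the maximal sub-alphabets); the members of `⊥(Δ)`. -/
def MinMergedFrom (Δ' Δ : Distr α) : Prop :=
  ∃ S ∈ Δ.comps, ∃ T ∈ Δ.comps, S ≠ T ∧
    Δ'.comps = MaximalMem ((Δ.comps \ {S, T}) ∪ {S ∪ T})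

/-- The set `A(Δ)` of shared symbols of a distribution. -/
def SharedSyms (Δ : Distr α) : Set α :=
  {a | ∃ S ∈ Δ.comps, ∃ T ∈ Δ.comps, S ≠ T ∧ a ∈ S ∧ a ∈ T}

/-- The substitution of `Δ'` into the component `C` of `Δ''` yields `Δs`:
`Δs` is obtained from the components of `Δ''` other than `C` together with the
intersections `C ∩ S` for components `S` of `Δ'`, keeping only the maximal
non-empty members. -/
def SubstResult (Δ' Δ'' : Distr α) (C : Set α) (Δs : Distr α) : Prop :=
  Δs.comps =
    MaximalMem {T : Set α |
      T.Nonempty ∧ (T ∈ Δ''.comps \ {C} ∨ ∃ S ∈ Δ'.comps, T = C ∩ S)}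

/-- One swap of two adjacent symbols forming a pair in `I`. -/
def SwapStep (I : Set (α × α)) (s t : List α) : Prop :=
  ∃ (u v : List α) (a b : α),
    (a, b) ∈ I ∧ s = u ++ a :: b :: v ∧ t = u ++ b :: a :: v

/-- Trace equivalence with respect to `I`: a finite sequence of swaps of
adjacent independent symbols. -/
def TraceEquiv (I : Set (α × α)) : List α → List α → Prop :=
  Relation.ReflTransGen (SwapStep I)

/-- `L` is trace-closed with respect to `I`. -/
def TraceClosed (I : Set (α × α)) (L : Set (List α)) : Prop :=
  L = {t | ∃ s ∈ L, TraceEquiv I s t}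

/-- The map `N` determined by the enumeration `c` of the components of a
distribution: `N(a) = {i : a ∉ Σ_i}`. -/
def Nmap {n : ℕ} (c : Fin n → Set α) (a : α) : Set (Fin n) :=
  {i | a ∉ c i}

/-- A simple path from `x` to `y` in the graph `(Σ, D)`: a list of pairwise
distinct symbols, starting at `x`, ending at `y`, with consecutive symbols
related by `D`. -/
def IsSimplePath (D : Set (α × α)) (p : List α) (x y : α) : Prop :=
  p.Nodup ∧ p.head? = some x ∧ p.getLast? = some y ∧
    p.Chain' (fun a b => (a, b) ∈ D)

/-- `Cr_D(S, y)` (with `N` given by the enumeration `c`): the set of indices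
`i` such that some simple path `p` from some `x ∈ S` to `y` in `(Σ, D)`
satisfies `i ∈ ⋂_{a ∈ p.dropLast} N(a)`. -/
def CrSet {n : ℕ} (c : Fin n → Set α) (D : Set (α × α)) (S : Set α) (y : α) :
    Set (Fin n) :=
  {i | ∃ x ∈ S, ∃ p : List α,
    IsSimplePath D p x y ∧ ∀ a ∈ p.dropLast, i ∈ Nmap c a}

/-- The smallest set of distributions containing `Q` and closed under
substitution. -/
inductive SubstClosure (Q : Set (Distr α)) : Distr α → Prop
  | base (Δ' : Distr α) (h : Δ' ∈ Q) : SubstClosure Q Δ'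
  | step (Δ' Δ'' Δs : Distr α) (C : Set α)
      (h1 : SubstClosure Q Δ') (h2 : SubstClosure Q Δ'')
      (hC : C ∈ Δ''.comps) (hA : SharedSyms Δ' ⊆ C)
      (hs : SubstResult Δ' Δ'' C Δs) : SubstClosure Q Δs

end Defs

section Count

variable {α : Type} [Fintype α] [DecidableEq α]

/-- `L(Σ_j)` (with `j` 0-indexed, so the paper's exponent `j+1` is `j+2`
here): all strings containing exactly one occurrence of each `σ_i ∈ Σ_j` and
exactly `j+2` occurrences of each `σ_i ∉ Σ_j`. -/
def Lword {m : ℕ} (σ : Fin m → α) (Sj : Set α) (j : ℕ) : Set (List α) :=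
  {s | ∀ i : Fin m,
    (σ i ∈ Sj → s.count (σ i) = 1) ∧ (σ i ∉ Sj → s.count (σ i) = j + 2)}

/-- The candidate counter example `L_cand = ⋃_j L(Σ_j)`, relative to an
enumeration `c` of the components and an enumeration `σ` of the alphabet. -/
def Lcand {n m : ℕ} (c : Fin n → Set α) (σ : Fin m → α) : Set (List α) :=
  ⋃ j : Fin n, Lword σ (c j) (j : ℕ)

end Count


section ProofAux

variable {α : Type}

lemma projA_nil (S : Set α) : projA S [] = [] := rfl

lemma projA_cons_mem (S : Set α) {a : α} (h : a ∈ S) (s : List α) :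
    projA S (a :: s) = a :: projA S s := by
  simp [projA, List.filter_cons, h]

lemma projA_cons_not_mem (S : Set α) {a : α} (h : a ∉ S) (s : List α) :
    projA S (a :: s) = projA S s := by
  simp [projA, List.filter_cons, h]

lemma mem_S_of_mem_projA {S : Set α} {a : α} {s : List α} (h : a ∈ projA S s) : a ∈ S := by
  have h' := (List.mem_filter.mp h).2
  simpa using h'

lemma projA_projA {A B : Set α} (h : A ⊆ B) (s : List α) :
    projA A (projA B s) = projA A s := by
  induction s with
  | nil => rfl
  | cons a s ih =>
    by_cases hB : a ∈ B
    · by_cases hA : a ∈ A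
      · rw [projA_cons_mem B hB, projA_cons_mem A hA, projA_cons_mem A hA, ih]
      · rw [projA_cons_mem B hB, projA_cons_not_mem A hA, projA_cons_not_mem A hA, ih]
    · rw [projA_cons_not_mem B hB, projA_cons_not_mem A (fun hA => hB (h hA)), ih]

lemma projA_eq_self {S : Set α} {s : List α} (h : ∀ a ∈ s, a ∈ S) : projA S s = s := by
  induction s with
  | nil => rfl
  | cons a s ih =>
    rw [projA_cons_mem S (h a (by simp)), ih (fun b hb => h b (by simp [hb]))]

lemma projA_empty (s : List α) : projA (∅ : Set α) s = [] := by
  induction s with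
  | nil => rfl
  | cons a s ih => rw [projA_cons_not_mem _ (by simp), ih]

lemma merge_lemma (A B : Set α) :
    ∀ (n : ℕ) (x y : List α), x.length + y.length ≤ n →
      (∀ a ∈ x, a ∈ A) → (∀ a ∈ y, a ∈ B) →
      projA (A ∩ B) x = projA (A ∩ B) y →
      ∃ z : List α, (∀ a ∈ z, a ∈ A ∪ B) ∧ projA A z = x ∧ projA B z = y := by
  intro n
  induction n with
  | zero =>
    intro x y hlen _ _ _
    have hx0 : x = [] := List.eq_nil_of_length_eq_zero (by omega)
    have hy0 : y = [] := List.eq_nil_of_length_eq_zero (by omega)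
    subst hx0; subst hy0
    exact ⟨[], by simp, rfl, rfl⟩
  | succ n ih =>
    intro x y hlen hx hy hproj
    rcases x with _ | ⟨a, x'⟩
    · rcases y with _ | ⟨b, y'⟩
      · exact ⟨[], by simp, rfl, rfl⟩
      · have hbB : b ∈ B := hy b (by simp)
        have hbA : b ∉ A := by
          intro hbA
          rw [projA_cons_mem (A ∩ B) (Set.mem_inter hbA hbB)] at hproj
          exact absurd hproj (by simp [projA_nil])
        rw [projA_cons_not_mem _ (fun h => hbA h.1)] at hproj
        obtain ⟨z, hz1, hz2, hz3⟩ := ih [] y' (by simp at hlen ⊢; omega) hx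
          (fun c hc => hy c (by simp [hc])) hproj
        refine ⟨b :: z, ?_, ?_, ?_⟩
        · intro c hc
          rcases List.mem_cons.mp hc with h | h
          · exact h ▸ Or.inr hbB
          · exact hz1 c h
        · rw [projA_cons_not_mem _ hbA, hz2]
        · rw [projA_cons_mem _ hbB, hz3]
    · have haA : a ∈ A := hx a (by simp)
      by_cases haB : a ∈ B
      · rw [projA_cons_mem (A ∩ B) (Set.mem_inter haA haB)] at hproj
        rcases y with _ | ⟨b, y'⟩
        · exact absurd hproj.symm (by simp [projA_nil])
        · have hbB : b ∈ B := hy b (by simp)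
          by_cases hbA : b ∈ A
          · rw [projA_cons_mem (A ∩ B) (Set.mem_inter hbA hbB)] at hproj
            obtain ⟨hab, hproj'⟩ := List.cons_eq_cons.mp hproj
            subst hab
            obtain ⟨z, hz1, hz2, hz3⟩ := ih x' y' (by simp at hlen ⊢; omega)
              (fun c hc => hx c (by simp [hc])) (fun c hc => hy c (by simp [hc])) hproj'
            refine ⟨a :: z, ?_, ?_, ?_⟩
            · intro c hc
              rcases List.mem_cons.mp hc with h | h
              · exact h ▸ Or.inl haA
              · exact hz1 c h
            · rw [projA_cons_mem _ haA, hz2]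
            · rw [projA_cons_mem _ haB, hz3]
          · rw [projA_cons_not_mem _ (fun h => hbA h.1)] at hproj
            obtain ⟨z, hz1, hz2, hz3⟩ := ih (a :: x') y' (by simp at hlen ⊢; omega) hx
              (fun c hc => hy c (by simp [hc]))
              (by rw [projA_cons_mem (A ∩ B) (Set.mem_inter haA haB)]; exact hproj)
            refine ⟨b :: z, ?_, ?_, ?_⟩
            · intro c hc
              rcases List.mem_cons.mp hc with h | h
              · exact h ▸ Or.inr hbB
              · exact hz1 c h
            · rw [projA_cons_not_mem _ hbA, hz2]
            · rw [projA_cons_mem _ hbB, hz3]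
      · rw [projA_cons_not_mem _ (fun h => haB h.2)] at hproj
        obtain ⟨z, hz1, hz2, hz3⟩ := ih x' y (by simp at hlen ⊢; omega)
          (fun c hc => hx c (by simp [hc])) hy hproj
        refine ⟨a :: z, ?_, ?_, ?_⟩
        · intro c hc
          rcases List.mem_cons.mp hc with h | h
          · exact h ▸ Or.inl haA
          · exact hz1 c h
        · rw [projA_cons_mem _ haA, hz2]
        · rw [projA_cons_not_mem _ haB, hz3]

lemma exists_maximal_mem {β : Type} (F : Set (Set β)) (hF : F.Finite) {T : Set β}
    (hT : T ∈ F) : ∃ U ∈ MaximalMem F, T ⊆ U := by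
  obtain ⟨U, hU, hmax⟩ := Set.Finite.exists_maximalFor id {V ∈ F | T ⊆ V}
    (hF.subset (Set.sep_subset _ _)) ⟨T, hT, subset_refl T⟩
  exact ⟨U, ⟨hU.1, fun V hV hUV => le_antisymm hUV (hmax ⟨hV, hU.2.trans hUV⟩ hUV)⟩, hU.2⟩

lemma build_lemma [Fintype α] (Δ' : Distr α) (C : Set α) (hsub : SharedSyms Δ' ⊆ C)
    (L : Set (List α)) (s : List α)
    (ht : ∀ S ∈ Δ'.comps, ∃ t ∈ L, projA (C ∩ S) t = projA (C ∩ S) s) :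
    ∃ u, (∀ S ∈ Δ'.comps, projA S u ∈ projA S '' L) ∧ projA C u = projA C s := by
  have key : ∀ F : Set (Set α), F.Finite → F ⊆ Δ'.comps →
      ∃ u, (∀ a ∈ u, a ∈ C ∪ ⋃₀ F) ∧ projA C u = projA C s ∧
        ∀ S ∈ F, ∃ t ∈ L, projA S u = projA S t := by
    intro F hF
    refine Set.Finite.induction_on
      (motive := fun F _ => F ⊆ Δ'.comps → ∃ u, (∀ a ∈ u, a ∈ C ∪ ⋃₀ F) ∧
        projA C u = projA C s ∧ ∀ S ∈ F, ∃ t ∈ L, projA S u = projA S t)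
      F hF ?_ ?_
    · intro _
      refine ⟨projA C s, fun a ha => Or.inl (mem_S_of_mem_projA ha),
        projA_projA (subset_refl C) s, fun S hS => absurd hS (Set.notMem_empty S)⟩
    · intro S' F hS'F hFfin ih hsubst
      obtain ⟨u, hu1, hu2, hu3⟩ := ih (fun S hS => hsubst (Set.mem_insert_of_mem _ hS))
      have hS'mem : S' ∈ Δ'.comps := hsubst (Set.mem_insert _ _)
      obtain ⟨t', ht'L, ht'p⟩ := ht S' hS'mem
      set A : Set α := C ∪ ⋃₀ F with hA
      set y : List α := projA S' t' with hy
      have hAB : A ∩ S' = C ∩ S' := by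
        apply Set.Subset.antisymm
        · rintro a ⟨haA, haS'⟩
          refine ⟨?_, haS'⟩
          rcases haA with h | h
          · exact h
          · obtain ⟨S, hSF, haS⟩ := h
            exact hsub ⟨S, hsubst (Set.mem_insert_of_mem _ hSF), S', hS'mem,
              fun he => hS'F (he ▸ hSF), haS, haS'⟩
        · rintro a ⟨haC, haS'⟩
          exact ⟨Or.inl haC, haS'⟩
      have hproj : projA (A ∩ S') u = projA (A ∩ S') y := by
        rw [hAB]
        have h1 : projA (C ∩ S') u = projA (C ∩ S') s := by
          rw [← projA_projA (Set.inter_subset_left) u, hu2,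
            projA_projA (Set.inter_subset_left) s]
        have h2 : projA (C ∩ S') y = projA (C ∩ S') s := by
          rw [hy, projA_projA (Set.inter_subset_right) t', ht'p]
        rw [h1, h2]
      obtain ⟨z, hz1, hz2, hz3⟩ := merge_lemma A S' (u.length + y.length) u y le_rfl
        hu1 (fun a ha => mem_S_of_mem_projA ha) hproj
      refine ⟨z, ?_, ?_, ?_⟩
      · intro a ha
        rcases hz1 a ha with h | h
        · rcases h with h | h
          · exact Or.inl h
          · exact Or.inr (by rw [Set.sUnion_insert]; exact Set.mem_union_right _ h)
        · exact Or.inr (by rw [Set.sUnion_insert]; exact Set.mem_union_left _ h)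
      · rw [← projA_projA (Set.subset_union_left : C ⊆ A) z, hz2, hu2]
      · intro S hS
        rcases Set.mem_insert_iff.mp hS with h | h
        · refine ⟨t', ht'L, ?_⟩
          rw [h, hz3, hy]
        · obtain ⟨t, htL, htp⟩ := hu3 S h
          refine ⟨t, htL, ?_⟩
          have hSA : S ⊆ A := fun a ha => Or.inr ⟨S, h, ha⟩
          rw [← projA_projA hSA z, hz2, htp]
  obtain ⟨u, _, hu2, hu3⟩ := key Δ'.comps (Set.toFinite _) (subset_refl _)
  refine ⟨u, fun S hS => ?_, hu2⟩
  obtain ⟨t, htL, htp⟩ := hu3 S hS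
  exact ⟨t, htL, htp.symm⟩

end ProofAux

/-- If `Δ'` is substitutable into the component `C` of
`Δ''` (i.e. `A(Δ') ⊆ C`) and `L` is decomposable with respect to both `Δ'`
and `Δ''`, then `L` is decomposable with respect to `(Δ' ⊢ Δ'')` (the result
of the substitution). -/
theorem statement_10 {α : Type} [Fintype α] (Δ' Δ'' Δs : Distr α) (C : Set α)
    (hC : C ∈ Δ''.comps) (hsub : SharedSyms Δ' ⊆ C)
    (hΔs : SubstResult Δ' Δ'' C Δs)
    (L : Set (List α)) (h1 : Decomposable L Δ') (h2 : Decomposable L Δ'') :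
    Decomposable L Δs := by
  have hsubset : L ⊆ ⋂ S ∈ Δs.comps, projA S ⁻¹' (projA S '' L) := by
    intro s hs
    rw [Set.mem_iInter₂]
    exact fun T _ => ⟨s, hs, rfl⟩
  refine Set.Subset.antisymm hsubset ?_
  intro s hs
  rw [Set.mem_iInter₂] at hs
  rw [SubstResult] at hΔs
  set F₀ : Set (Set α) := {T : Set α |
      T.Nonempty ∧ (T ∈ Δ''.comps \ {C} ∨ ∃ S ∈ Δ'.comps, T = C ∩ S)} with hF₀
  -- Step A: matches on every member of F₀
  have stepA : ∀ T ∈ F₀, ∃ t ∈ L, projA T t = projA T s := by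
    intro T hT
    obtain ⟨U, hU, hTU⟩ := exists_maximal_mem F₀ (Set.toFinite _) hT
    have hUs : U ∈ Δs.comps := by rw [hΔs]; exact hU
    obtain ⟨t, htL, htp⟩ := hs U hUs
    exact ⟨t, htL, by rw [← projA_projA hTU t, htp, projA_projA hTU s]⟩
  -- L is nonempty
  have hLne : ∃ t, t ∈ L := by
    obtain ⟨a, haC⟩ := Δ''.comps_nonempty C hC
    obtain ⟨S₀, hS₀, haS₀⟩ := Δ'.comps_cover a
    obtain ⟨t, htL, _⟩ := stepA (C ∩ S₀) ⟨⟨a, haC, haS₀⟩, Or.inr ⟨S₀, hS₀, rfl⟩⟩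
    exact ⟨t, htL⟩
  -- Step B: matches on every C ∩ S
  have stepB : ∀ S ∈ Δ'.comps, ∃ t ∈ L, projA (C ∩ S) t = projA (C ∩ S) s := by
    intro S hS
    rcases Set.eq_empty_or_nonempty (C ∩ S) with he | hne
    · obtain ⟨t, htL⟩ := hLne
      exact ⟨t, htL, by rw [he, projA_empty, projA_empty]⟩
    · exact stepA (C ∩ S) ⟨hne, Or.inr ⟨S, hS, rfl⟩⟩
  -- Step C: build u ∈ L with projA C u = projA C s
  obtain ⟨u, hu1, hu2⟩ := build_lemma Δ' C hsub L s stepB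
  have huL : u ∈ L := by
    rw [h1, Set.mem_iInter₂]
    exact fun S hS => hu1 S hS
  -- Step D: matches on every component of Δ''
  have stepD : s ∈ ⋂ T ∈ Δ''.comps, projA T ⁻¹' (projA T '' L) := by
    rw [Set.mem_iInter₂]
    intro T hT
    by_cases hTC : T = C
    · subst hTC
      exact ⟨u, huL, hu2⟩
    · obtain ⟨t, htL, htp⟩ := stepA T ⟨Δ''.comps_nonempty T hT, Or.inl ⟨hT, hTC⟩⟩
      exact ⟨t, htL, htp⟩
  rw [h2]
  exact stepD
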